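/- Let A and B be unital pro-C*-algebras and let φ : A → B be a unital *-algebra homomorphism (no continuity assumed). Then φ maps bounded elements to bounded elements: for every a ∈ A with ‖a‖_∞ < ∞ one has ‖φ(a)‖_∞ ≤ ‖a‖_∞; in particular φ(A_b) ⊆ B_b. -/

import Mathlib

open scoped ENNReal

def IsCStarSeminorm {A : Type*} [Ring A] [StarRing A] [Algebra ℂ A] (p : A → ℝ) : Prop :=
  (∀ a, 0 ≤ p a) ∧ (∀ a b, p (a + b) ≤ p a + p b) ∧
    (∀ (c : ℂ) (a : A), p (c • a) = ‖c‖ * p a) ∧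
    (∀ a b, p (a * b) ≤ p a * p b) ∧ (∀ a, p (star a * a) = p a ^ 2)

def contCStarSeminorms (A : Type*) [TopologicalSpace A] [Ring A] [StarRing A] [Algebra ℂ A] :
    Set (A → ℝ) :=
  {p | IsCStarSeminorm p ∧ Continuous p}

class ProCStarAlgebra (A : Type*) [UniformSpace A] [Ring A] [StarRing A] [Algebra ℂ A] :
    Prop where
  t2 : T2Space A
  complete : CompleteSpace A
  topologicalRing : IsTopologicalRing A
  continuousStar : ContinuousStar A
  uniformAddGroup : IsUniformAddGroup A
  mem_nhds_zero : ∀ s : Set A, s ∈ nhds (0 : A) ↔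
    ∃ p ∈ contCStarSeminorms A, ∃ ε : ℝ, 0 < ε ∧ {a : A | p a < ε} ⊆ s

noncomputable def uniformNorm (A : Type*) [UniformSpace A] [Ring A] [StarRing A] [Algebra ℂ A]
    (a : A) : ℝ≥0∞ :=
  ⨆ p ∈ contCStarSeminorms A, ENNReal.ofReal (p a)

def boundedElems (A : Type*) [UniformSpace A] [Ring A] [StarRing A] [Algebra ℂ A] : Set A :=
  {a | uniformNorm A a < ⊤}

def expSet (A : Type*) [UniformSpace A] [Ring A] [StarRing A] [Algebra ℂ A] : Set A :=
  {w | ∃ (n : ℕ) (a e : Fin n → A),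
    (∀ j, star (a j) = a j) ∧
    (∀ j, HasSum (fun k : ℕ => ((Complex.I ^ k / (k.factorial : ℂ)) • a j ^ k)) (e j)) ∧
    w = (List.ofFn e).prod}

open Filter

namespace IsCStarSeminorm

variable {A : Type*} [Ring A] [StarRing A] [Algebra ℂ A] {p : A → ℝ}

lemma nonneg (hp : IsCStarSeminorm p) : ∀ a, 0 ≤ p a := hp.1

lemma add_le (hp : IsCStarSeminorm p) : ∀ a b, p (a + b) ≤ p a + p b := hp.2.1

lemma smul_eq (hp : IsCStarSeminorm p) : ∀ (c : ℂ) (a : A), p (c • a) = ‖c‖ * p a := hp.2.2.1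

lemma mul_le (hp : IsCStarSeminorm p) : ∀ a b, p (a * b) ≤ p a * p b := hp.2.2.2.1

lemma cstar (hp : IsCStarSeminorm p) : ∀ a, p (star a * a) = p a ^ 2 := hp.2.2.2.2

lemma zero (hp : IsCStarSeminorm p) : p 0 = 0 := by
  have := hp.smul_eq 0 0
  simpa using this

lemma neg (hp : IsCStarSeminorm p) (a : A) : p (-a) = p a := by
  have := hp.smul_eq (-1) a
  rwa [neg_one_smul, norm_neg, norm_one, one_mul] at this

lemma one_le (hp : IsCStarSeminorm p) : p 1 ≤ 1 := by
  have h := hp.cstar 1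
  rw [star_one, one_mul] at h
  nlinarith [hp.nonneg 1]

lemma pow_le (hp : IsCStarSeminorm p) {x : A} {s : ℝ} (hx : p x ≤ s) (hs : 0 ≤ s) :
    ∀ n : ℕ, p (x ^ n) ≤ s ^ n
  | 0 => by simpa using hp.one_le
  | n + 1 => by
      rw [pow_succ, pow_succ]
      exact (hp.mul_le _ _).trans
        (mul_le_mul (hp.pow_le hx hs n) hx (hp.nonneg x) (pow_nonneg hs n))

lemma sum_le (hp : IsCStarSeminorm p) {ι : Type*} (F : Finset ι) (f : ι → A) :
    p (∑ i ∈ F, f i) ≤ ∑ i ∈ F, p (f i) := by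
  classical
  induction F using Finset.cons_induction with
  | empty => simp [hp.zero]
  | cons a s ha ih =>
    rw [Finset.sum_cons, Finset.sum_cons]
    exact (hp.add_le _ _).trans (by linarith)

end IsCStarSeminorm

section ProCStar

variable {A : Type*} [UniformSpace A] [Ring A] [StarRing A] [Algebra ℂ A] [ProCStarAlgebra A]

lemma tendsto_zero_of_csn {z : ℕ → A} {b : ℕ → ℝ} (hb : Tendsto b atTop (nhds 0))
    (h : ∀ p ∈ contCStarSeminorms A, ∀ n, p (z n) ≤ b n) :
    Tendsto z atTop (nhds (0 : A)) := by
  rw [Filter.tendsto_def]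
  intro U hU
  obtain ⟨p, hp, ε, hε, hsub⟩ := (ProCStarAlgebra.mem_nhds_zero U).mp hU
  filter_upwards [hb.eventually_lt_const hε] with n hn
  exact hsub (lt_of_le_of_lt (h p hp n) hn)

lemma tendsto_of_csn {z : ℕ → A} {L : A} {b : ℕ → ℝ} (hb : Tendsto b atTop (nhds 0))
    (h : ∀ p ∈ contCStarSeminorms A, ∀ n, p (z n - L) ≤ b n) :
    Tendsto z atTop (nhds L) := by
  haveI := ProCStarAlgebra.topologicalRing (A := A)
  exact tendsto_sub_nhds_zero_iff.mp (tendsto_zero_of_csn hb h)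

lemma cauchySeq_of_csn {z : ℕ → A}
    (H : ∀ ε : ℝ, 0 < ε → ∃ M, ∀ m n, M ≤ m → M ≤ n →
      ∀ p ∈ contCStarSeminorms A, p (z m - z n) < ε) : CauchySeq z := by
  haveI := ProCStarAlgebra.uniformAddGroup (A := A)
  rw [cauchySeq_iff]
  intro V hV
  rw [uniformity_eq_comap_nhds_zero A, Filter.mem_comap] at hV
  obtain ⟨U, hU, hUV⟩ := hV
  obtain ⟨p, hp, ε, hε, hsub⟩ := (ProCStarAlgebra.mem_nhds_zero U).mp hU
  obtain ⟨M, hM⟩ := H ε hε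
  refine ⟨M, fun k hk l hl => hUV ?_⟩
  exact Set.mem_preimage.mpr (hsub (hM l k hl hk p hp))

lemma exists_inverse (H : A) (s : ℝ) (hs0 : 0 ≤ s)
    (hb : ∀ p ∈ contCStarSeminorms A, p H ≤ s) (τ : ℂ) (hτ : s < ‖τ‖) :
    ∃ g : A, (algebraMap ℂ A τ - H) * g = 1 ∧ g * (algebraMap ℂ A τ - H) = 1 := by
  haveI := ProCStarAlgebra.t2 (A := A)
  haveI := ProCStarAlgebra.complete (A := A)
  haveI := ProCStarAlgebra.topologicalRing (A := A)
  have hτpos : (0 : ℝ) < ‖τ‖ := lt_of_le_of_lt hs0 hτ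
  have hτ0 : τ ≠ 0 := by
    intro h; rw [h, norm_zero] at hτpos; exact lt_irrefl _ hτpos
  set σ : ℝ := s / ‖τ‖ with hσdef
  have hσ0 : 0 ≤ σ := div_nonneg hs0 (norm_nonneg τ)
  have hσ1 : σ < 1 := (div_lt_one hτpos).mpr hτ
  have h1σ : (0:ℝ) < 1 - σ := by linarith
  set f : ℕ → A := fun n => ((τ⁻¹ : ℂ) ^ (n + 1)) • H ^ n with hfdef
  set P : ℕ → A := fun N => ∑ n ∈ Finset.range (N + 1), f n with hPdef
  -- seminorm bound on the terms
  have hf : ∀ p ∈ contCStarSeminorms A, ∀ n, p (f n) ≤ σ ^ n / ‖τ‖ := by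
    intro p hp n
    have h1 : p (f n) = ‖(τ⁻¹ : ℂ) ^ (n + 1)‖ * p (H ^ n) := hp.1.smul_eq _ _
    rw [h1, norm_pow, norm_inv]
    have h2 : p (H ^ n) ≤ s ^ n := hp.1.pow_le (hb p hp) hs0 n
    have h3 : ‖τ‖⁻¹ ^ (n + 1) * p (H ^ n) ≤ ‖τ‖⁻¹ ^ (n + 1) * s ^ n :=
      mul_le_mul_of_nonneg_left h2 (by positivity)
    refine h3.trans (le_of_eq ?_)
    rw [hσdef, div_pow, div_div]
    rw [inv_pow]
    field_simp
    ring
  -- geometric tail bound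
  have geom_tail : ∀ a b : ℕ, ∑ n ∈ Finset.Ico a b, σ ^ n ≤ σ ^ a / (1 - σ) := by
    intro a b
    rw [Finset.sum_Ico_eq_sum_range]
    calc ∑ i ∈ Finset.range (b - a), σ ^ (a + i)
        = σ ^ a * ∑ i ∈ Finset.range (b - a), σ ^ i := by
          rw [Finset.mul_sum]; exact Finset.sum_congr rfl fun i _ => pow_add σ a i
      _ ≤ σ ^ a * (1 / (1 - σ)) := by
          refine mul_le_mul_of_nonneg_left ?_ (pow_nonneg hσ0 a)
          have hmul := geom_sum_mul σ (b - a)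
          rw [le_div_iff₀ h1σ]
          nlinarith [pow_nonneg hσ0 (b - a)]
      _ = σ ^ a / (1 - σ) := by rw [div_eq_mul_inv, div_eq_mul_inv, one_mul]
  -- Cauchy
  have hcau : CauchySeq P := by
    apply cauchySeq_of_csn
    intro ε hε
    have htend : Tendsto (fun M : ℕ => σ ^ M / ((1 - σ) * ‖τ‖)) atTop (nhds 0) := by
      simpa using (tendsto_pow_atTop_nhds_zero_of_lt_one hσ0 hσ1).div_const ((1 - σ) * ‖τ‖)
    obtain ⟨M, hM⟩ := (htend.eventually_lt_const hε).exists_forall_of_atTop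
    have hbound : ∀ m n : ℕ, M ≤ m → M ≤ n → n ≤ m →
        ∀ p ∈ contCStarSeminorms A, p (P m - P n) < ε := by
      intro m n _ hn hnm p hp
      have hsum : P m - P n = ∑ k ∈ Finset.Ico (n + 1) (m + 1), f k :=
        (Finset.sum_Ico_eq_sub f (by omega)).symm
      rw [hsum]
      calc p (∑ k ∈ Finset.Ico (n + 1) (m + 1), f k)
          ≤ ∑ k ∈ Finset.Ico (n + 1) (m + 1), p (f k) := hp.1.sum_le _ _
        _ ≤ ∑ k ∈ Finset.Ico (n + 1) (m + 1), σ ^ k / ‖τ‖ :=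
            Finset.sum_le_sum fun k _ => hf p hp k
        _ = (∑ k ∈ Finset.Ico (n + 1) (m + 1), σ ^ k) / ‖τ‖ := by
            rw [Finset.sum_div]
        _ ≤ (σ ^ (n + 1) / (1 - σ)) / ‖τ‖ :=
            (div_le_div_iff_of_pos_right hτpos).mpr (geom_tail _ _)
        _ = σ ^ (n + 1) / ((1 - σ) * ‖τ‖) := by rw [div_div]
        _ ≤ σ ^ M / ((1 - σ) * ‖τ‖) := by
            rw [div_eq_mul_inv, div_eq_mul_inv]
            exact mul_le_mul_of_nonneg_right
              (pow_le_pow_of_le_one hσ0 hσ1.le (by omega)) (by positivity)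
        _ < ε := hM M le_rfl
    refine ⟨M, fun m n hm hn p hp => ?_⟩
    rcases le_total n m with h | h
    · exact hbound m n hm hn h p hp
    · rw [show P m - P n = -(P n - P m) from (neg_sub _ _).symm, hp.1.neg]
      exact hbound n m hn hm h p hp
  obtain ⟨g, hg⟩ := cauchySeq_tendsto_of_complete hcau
  -- telescoping identities
  have hsc : ∀ n : ℕ, (τ⁻¹ : ℂ) ^ (n + 1) * τ = τ⁻¹ ^ n := by
    intro n
    rw [pow_succ, mul_assoc, inv_mul_cancel₀ hτ0, mul_one]
  have hterm : ∀ n : ℕ, (algebraMap ℂ A τ - H) * f n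
      = ((τ⁻¹ : ℂ) ^ n) • H ^ n - ((τ⁻¹ : ℂ) ^ (n + 1)) • H ^ (n + 1) := by
    intro n
    show (algebraMap ℂ A τ - H) * (((τ⁻¹ : ℂ) ^ (n + 1)) • H ^ n) = _
    rw [sub_mul]
    congr 1
    · rw [mul_smul_comm, ← Algebra.smul_def, smul_smul, hsc]
    · rw [mul_smul_comm, ← pow_succ']
  have hterm' : ∀ n : ℕ, f n * (algebraMap ℂ A τ - H)
      = ((τ⁻¹ : ℂ) ^ n) • H ^ n - ((τ⁻¹ : ℂ) ^ (n + 1)) • H ^ (n + 1) := by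
    intro n
    show (((τ⁻¹ : ℂ) ^ (n + 1)) • H ^ n) * (algebraMap ℂ A τ - H) = _
    rw [mul_sub]
    congr 1
    · rw [smul_mul_assoc, ← Algebra.commutes, ← Algebra.smul_def, smul_smul, hsc]
    · rw [smul_mul_assoc, ← pow_succ]
  have hkey : ∀ N : ℕ, (algebraMap ℂ A τ - H) * P N
      = 1 - ((τ⁻¹ : ℂ) ^ (N + 1)) • H ^ (N + 1) := by
    intro N
    rw [hPdef, Finset.mul_sum]
    simp only [hterm]
    rw [Finset.sum_range_sub' (fun n => ((τ⁻¹ : ℂ) ^ n) • H ^ n) (N + 1)]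
    simp
  have hkey' : ∀ N : ℕ, P N * (algebraMap ℂ A τ - H)
      = 1 - ((τ⁻¹ : ℂ) ^ (N + 1)) • H ^ (N + 1) := by
    intro N
    rw [hPdef, Finset.sum_mul]
    simp only [hterm']
    rw [Finset.sum_range_sub' (fun n => ((τ⁻¹ : ℂ) ^ n) • H ^ n) (N + 1)]
    simp
  -- limit of remainder
  have hrem : Tendsto (fun N : ℕ => 1 - ((τ⁻¹ : ℂ) ^ (N + 1)) • H ^ (N + 1)) atTop
      (nhds (1 : A)) := by
    have h0 : Tendsto (fun N : ℕ => ((τ⁻¹ : ℂ) ^ (N + 1)) • H ^ (N + 1)) atTop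
        (nhds (0 : A)) := by
      apply tendsto_zero_of_csn (b := fun N => σ ^ (N + 1))
      · have := (tendsto_pow_atTop_nhds_zero_of_lt_one hσ0 hσ1).comp
          (tendsto_add_atTop_nat 1)
        exact this
      · intro p hp N
        have h1 : p (((τ⁻¹ : ℂ) ^ (N + 1)) • H ^ (N + 1))
            = ‖(τ⁻¹ : ℂ) ^ (N + 1)‖ * p (H ^ (N + 1)) := hp.1.smul_eq _ _
        rw [h1, norm_pow, norm_inv]
        calc ‖τ‖⁻¹ ^ (N + 1) * p (H ^ (N + 1))
            ≤ ‖τ‖⁻¹ ^ (N + 1) * s ^ (N + 1) :=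
              mul_le_mul_of_nonneg_left (hp.1.pow_le (hb p hp) hs0 _) (by positivity)
          _ = σ ^ (N + 1) := by rw [hσdef, div_pow, inv_pow]; field_simp
    have := tendsto_const_nhds (x := (1 : A)) (f := atTop (α := ℕ)) |>.sub h0
    simpa using this
  have hmul1 : Tendsto (fun N => (algebraMap ℂ A τ - H) * P N) atTop
      (nhds ((algebraMap ℂ A τ - H) * g)) := hg.const_mul _
  have hmul2 : Tendsto (fun N => P N * (algebraMap ℂ A τ - H)) atTop
      (nhds (g * (algebraMap ℂ A τ - H))) := hg.mul_const _
  refine ⟨g, ?_, ?_⟩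
  · have h1 : (fun N => (algebraMap ℂ A τ - H) * P N)
        = fun N => 1 - ((τ⁻¹ : ℂ) ^ (N + 1)) • H ^ (N + 1) := funext hkey
    rw [h1] at hmul1
    exact tendsto_nhds_unique hmul1 hrem
  · have h1 : (fun N => P N * (algebraMap ℂ A τ - H))
        = fun N => 1 - ((τ⁻¹ : ℂ) ^ (N + 1)) • H ^ (N + 1) := funext hkey'
    rw [h1] at hmul2
    exact tendsto_nhds_unique hmul2 hrem

end ProCStar


theorem gelfand_aux {R : Type*} [SeminormedRing R] [NormedAlgebra ℂ R] (h : R) (s : ℝ)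
    (hs : 0 ≤ s)
    (hpow : ∀ k : ℕ, ‖h ^ 2 ^ k‖ = ‖h‖ ^ 2 ^ k)
    (hinv : ∀ τ : ℂ, s < ‖τ‖ →
      ∃ g : R, (algebraMap ℂ R τ - h) * g = 1 ∧ g * (algebraMap ℂ R τ - h) = 1) :
    ‖h‖ ≤ s := by
  letI : NormedAlgebra ℂ (UniformSpace.Completion R) :=
    { (inferInstance : Algebra ℂ (UniformSpace.Completion R)) with
      norm_smul_le := fun c x => norm_smul_le c x }
  set C := UniformSpace.Completion R with hC
  set H : C := (h : C) with hH
  -- the spectrum of H is contained in the closed ball of radius s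
  have hspec : ∀ τ : ℂ, τ ∈ spectrum ℂ H → ‖τ‖ ≤ s := by
    intro τ hτ
    by_contra hcon
    push_neg at hcon
    obtain ⟨g, hg1, hg2⟩ := hinv τ hcon
    apply spectrum.mem_iff.mp hτ
    refine ⟨⟨algebraMap ℂ C τ - H, (g : C), ?_, ?_⟩, rfl⟩
    · rw [UniformSpace.Completion.algebraMap_def, hH,
        ← UniformSpace.Completion.coe_sub, ← UniformSpace.Completion.coe_mul, hg1,
        UniformSpace.Completion.coe_one]
    · rw [UniformSpace.Completion.algebraMap_def, hH,
        ← UniformSpace.Completion.coe_sub, ← UniformSpace.Completion.coe_mul, hg2,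
        UniformSpace.Completion.coe_one]
  have hrad : spectralRadius ℂ H ≤ ENNReal.ofReal s := by
    rw [spectralRadius]
    refine iSup₂_le fun τ hτ => ?_
    have h1 : ‖τ‖ ≤ s := hspec τ hτ
    rw [ENNReal.ofReal, ENNReal.coe_le_coe, ← norm_toNNReal]
    exact Real.toNNReal_mono h1
  -- Gelfand's formula along the subsequence n = 2 ^ k
  have hg := spectrum.pow_nnnorm_pow_one_div_tendsto_nhds_spectralRadius H
  have hsub : Tendsto (fun k : ℕ => 2 ^ k) atTop atTop :=
    tendsto_pow_atTop_atTop_of_one_lt one_lt_two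
  have hcomp := hg.comp hsub
  have hval : ∀ k : ℕ, ((‖H ^ 2 ^ k‖₊ : ENNReal) ^ (1 / ((2:ℕ) ^ k : ℕ) : ℝ))
      = (‖h‖₊ : ENNReal) := by
    intro k
    have h1 : H ^ 2 ^ k = ((h ^ 2 ^ k : R) : C) :=
      ((UniformSpace.Completion.coeRingHom (α := R)).map_pow h (2 ^ k)).symm
    have h2 : ‖h ^ 2 ^ k‖₊ = ‖h‖₊ ^ 2 ^ k := by
      have := hpow k
      ext
      push_cast
      simpa using this
    rw [h1, UniformSpace.Completion.nnnorm_coe, h2]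
    rw [ENNReal.coe_pow, ← ENNReal.rpow_natCast (‖h‖₊ : ENNReal) (2 ^ k),
      ← ENNReal.rpow_mul]
    have hne : (((2 : ℕ) ^ k : ℕ) : ℝ) ≠ 0 := by positivity
    rw [mul_one_div, div_self hne, ENNReal.rpow_one]
  have hconst : Tendsto (fun _ : ℕ => (‖h‖₊ : ENNReal)) atTop (nhds (spectralRadius ℂ H)) := by
    have hfun : ((fun n : ℕ => ((‖H ^ n‖₊ : ENNReal)) ^ (1 / (n : ℝ))) ∘ (fun k : ℕ => 2 ^ k))
        = fun _ : ℕ => (‖h‖₊ : ENNReal) := by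
      funext k
      exact hval k
    rw [hfun] at hcomp
    exact hcomp
  have heq : (‖h‖₊ : ENNReal) = spectralRadius ℂ H :=
    tendsto_nhds_unique tendsto_const_nhds hconst
  have hle : (‖h‖₊ : ENNReal) ≤ ENNReal.ofReal s := heq ▸ hrad
  rw [ENNReal.ofReal, ENNReal.coe_le_coe, ← NNReal.coe_le_coe] at hle
  simpa [Real.coe_toNNReal _ hs] using hle


lemma csn_pow_two_pow {B : Type*} [Ring B] [StarRing B] [Algebra ℂ B] {q : B → ℝ}
    (hq : IsCStarSeminorm q) {z : B} (hz : star z = z) (k : ℕ) :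
    q (z ^ 2 ^ k) = q z ^ 2 ^ k := by
  induction k with
  | zero => simp
  | succ k ih =>
    have h2 : star (z ^ 2 ^ k) = z ^ 2 ^ k := by rw [star_pow, hz]
    calc q (z ^ 2 ^ (k + 1)) = q (z ^ 2 ^ k * z ^ 2 ^ k) := by
          rw [pow_succ, pow_mul, pow_two]
      _ = q (star (z ^ 2 ^ k) * z ^ 2 ^ k) := by rw [h2]
      _ = q (z ^ 2 ^ k) ^ 2 := hq.cstar _
      _ = (q z ^ 2 ^ k) ^ 2 := by rw [ih]
      _ = q z ^ 2 ^ (k + 1) := by rw [← pow_mul, ← pow_succ]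

def NormedOf (B : Type*) (_q : B → ℝ) : Type _ := B


/-- A (not necessarily continuous) unital *-algebra homomorphism
`φ : A → B` between unital pro-C*-algebras maps bounded elements to bounded elements:
`‖φ a‖_∞ ≤ ‖a‖_∞` whenever `‖a‖_∞ < ∞`; in particular `φ(A_b) ⊆ B_b`. -/
theorem stmt5 {A B : Type*}
    [UniformSpace A] [Ring A] [StarRing A] [Algebra ℂ A] [ProCStarAlgebra A]
    [UniformSpace B] [Ring B] [StarRing B] [Algebra ℂ B] [ProCStarAlgebra B]
    (φ : A →⋆ₐ[ℂ] B) :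
    (∀ a : A, uniformNorm A a < ⊤ → uniformNorm B (φ a) ≤ uniformNorm A a) ∧
    φ '' boundedElems A ⊆ boundedElems B := by
  have main : ∀ a : A, uniformNorm A a < ⊤ → uniformNorm B (φ a) ≤ uniformNorm A a := by
    intro a ha
    set T : ℝ := (uniformNorm A a).toReal with hT
    have hT0 : 0 ≤ T := ENNReal.toReal_nonneg
    have hofT : ENNReal.ofReal T = uniformNorm A a := ENNReal.ofReal_toReal ha.ne
    have hpb : ∀ p ∈ contCStarSeminorms A, p a ≤ T := by
      intro p hp
      have h1 : ENNReal.ofReal (p a) ≤ uniformNorm A a :=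
        le_iSup₂ (f := fun p (_ : p ∈ contCStarSeminorms A) => ENNReal.ofReal (p a)) p hp
      rw [← hofT] at h1
      exact (ENNReal.ofReal_le_ofReal_iff hT0).mp h1
    have key : ∀ q ∈ contCStarSeminorms B, q (φ a) ≤ T := by
      intro q hq
      set H : A := star a * a with hHdef
      have hHb : ∀ p ∈ contCStarSeminorms A, p H ≤ T ^ 2 := by
        intro p hp
        rw [hHdef, hp.1.cstar]
        have := hpb p hp
        nlinarith [hp.1.nonneg a]
      have hself : star (φ H) = φ H := by
        have h1 : φ H = star (φ a) * φ a := by rw [hHdef, map_mul, map_star]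
        rw [h1, star_mul, star_star]
      letI instR : Ring (NormedOf B q) := inferInstanceAs (Ring B)
      letI sg : SeminormedAddCommGroup (NormedOf B q) :=
        AddGroupSeminorm.toSeminormedAddCommGroup
          { toFun := q
            map_zero' := hq.1.zero
            add_le' := hq.1.add_le
            neg' := hq.1.neg }
      letI : SeminormedRing (NormedOf B q) :=
        { instR, sg with norm_mul_le := hq.1.mul_le }
      letI instAlg : Algebra ℂ (NormedOf B q) := (inferInstance : Algebra ℂ B)
      letI : NormedAlgebra ℂ (NormedOf B q) :=
        { instAlg with norm_smul_le := fun c x => le_of_eq (hq.1.smul_eq c x) }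
      let Hb : NormedOf B q := φ H
      have hg : ‖Hb‖ ≤ T ^ 2 := by
        refine gelfand_aux Hb (T ^ 2) (by positivity) ?_ ?_
        · intro k
          exact csn_pow_two_pow hq.1 hself k
        · intro τ hτ
          obtain ⟨g, hg1, hg2⟩ := exists_inverse H (T ^ 2) (by positivity) hHb τ hτ
          refine ⟨φ g, ?_, ?_⟩
          · show (algebraMap ℂ B τ - φ H) * φ g = 1
            rw [show algebraMap ℂ B τ = φ (algebraMap ℂ A τ) from
              (AlgHomClass.commutes φ τ).symm, ← map_sub, ← map_mul, hg1, map_one]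
          · show φ g * (algebraMap ℂ B τ - φ H) = 1
            rw [show algebraMap ℂ B τ = φ (algebraMap ℂ A τ) from
              (AlgHomClass.commutes φ τ).symm, ← map_sub, ← map_mul, hg2, map_one]
      have hq2 : q (φ a) ^ 2 ≤ T ^ 2 := by
        have h1 : q (φ a) ^ 2 = q (φ H) := by
          rw [← hq.1.cstar (φ a)]
          congr 1
          rw [hHdef, map_mul, map_star]
        rw [h1]
        exact hg
      nlinarith [hq.1.nonneg (φ a)]
    calc uniformNorm B (φ a) ≤ ENNReal.ofReal T := by
          refine iSup₂_le fun q hq => ?_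
          exact ENNReal.ofReal_le_ofReal (key q hq)
      _ = uniformNorm A a := hofT
  refine ⟨main, ?_⟩
  rintro b ⟨a, ha, rfl⟩
  exact lt_of_le_of_lt (main a ha) ha
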